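/- Let j, k, n be positive integers with 1 ≤ j ≤ k ≤ n, h = j+k+n+1, and n ≥ ⌊h/2⌋ + 1. Then Mo(P_L(j,k,n)) − Mo(C_L(1,h−2)) = 24·((j+n)(k−1) + kj) > 0. -/
import Mathlib


open Finset

/-- The Mostar index of the tree-like phenylene `P_L(j,k,n)`, via the cut method. -/
def MoPL (j k n : ℕ) : ℤ :=
  let h : ℕ := j + k + n + 1
  6 * (2 * ((j : ℤ) + 1) * ((n : ℤ) - (k : ℤ)) +
       2 * ((k : ℤ) + 1) * ((n : ℤ) - (j : ℤ)) +
       2 * ((n : ℤ) + 1) * ((k : ℤ) - (j : ℤ)) +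
       4 * ∑ i ∈ Finset.Icc 1 j, ((h : ℤ) + 1 - 2 * (i : ℤ)) +
       4 * ∑ i ∈ Finset.Icc 1 k, ((h : ℤ) + 1 - 2 * (i : ℤ)) +
       4 * ∑ i ∈ Finset.Icc 1 n, |(h : ℤ) + 1 - 2 * (i : ℤ)| +
       2 * ∑ i ∈ Finset.Icc 1 j, ((h : ℤ) - 2 * (i : ℤ)) +
       2 * ∑ i ∈ Finset.Icc 1 k, ((h : ℤ) - 2 * (i : ℤ)) +
       2 * ∑ i ∈ Finset.Icc 1 n, |(h : ℤ) - 2 * (i : ℤ)|)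

/-- The Mostar index of the phenylene chain `C_L(1, h−2)` (closed form). -/
def MoCL1 (h : ℕ) : ℤ :=
  72 * ((h / 2 : ℕ) : ℤ) * (((h + 1) / 2 : ℕ) : ℤ) - 24 * ((h / 2 : ℕ) : ℤ) +
    24 * ((h : ℤ) - 1)


lemma sum_lin (c : ℤ) (m : ℕ) :
    ∑ i ∈ Finset.Icc 1 m, (c - 2 * (i : ℤ)) = m * c - m * (m + 1) := by
  induction m with
  | zero => simp
  | succ m ih =>
    rw [Finset.sum_Icc_succ_top (by omega), ih]
    push_cast; ring

lemma sum_abs (c n : ℕ) (hn : c / 2 ≤ n) :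
    ∑ i ∈ Finset.Icc 1 n, |(c : ℤ) - 2 * (i : ℤ)| =
      2 * ((c / 2 : ℕ) : ℤ) * c - 2 * ((c / 2 : ℕ) : ℤ) * (((c / 2 : ℕ) : ℤ) + 1)
        + n * (n + 1) - n * c := by
  set t := c / 2 with ht
  have hsplit : Finset.Icc 1 n = Finset.Icc 1 t ∪ Finset.Icc (t + 1) n := by
    ext x; simp [Finset.mem_Icc, Finset.mem_union]; omega
  have hdisj : Disjoint (Finset.Icc 1 t) (Finset.Icc (t + 1) n) := by
    simp [Finset.disjoint_left, Finset.mem_Icc]; omega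
  rw [hsplit, Finset.sum_union hdisj]
  have h1 : ∑ i ∈ Finset.Icc 1 t, |(c : ℤ) - 2 * (i : ℤ)| =
      ∑ i ∈ Finset.Icc 1 t, ((c : ℤ) - 2 * (i : ℤ)) := by
    apply Finset.sum_congr rfl
    intro i hi
    simp only [Finset.mem_Icc] at hi
    have : 2 * i ≤ c := by omega
    rw [abs_of_nonneg]
    have : (2 * i : ℤ) ≤ c := by exact_mod_cast this
    linarith
  have h2 : ∑ i ∈ Finset.Icc (t + 1) n, |(c : ℤ) - 2 * (i : ℤ)| =
      ∑ i ∈ Finset.Icc (t + 1) n, (2 * (i : ℤ) - (c : ℤ)) := by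
    apply Finset.sum_congr rfl
    intro i hi
    simp only [Finset.mem_Icc] at hi
    have : c < 2 * i := by omega
    have : (c : ℤ) < 2 * i := by exact_mod_cast this
    rw [abs_of_nonpos (by linarith)]; ring
  have h3 : ∑ i ∈ Finset.Icc (t + 1) n, (2 * (i : ℤ) - (c : ℤ)) =
      (∑ i ∈ Finset.Icc 1 n, (2 * (i : ℤ) - (c : ℤ)))
        - ∑ i ∈ Finset.Icc 1 t, (2 * (i : ℤ) - (c : ℤ)) := by
    rw [hsplit, Finset.sum_union hdisj]; ring
  have h4 : ∀ m : ℕ, ∑ i ∈ Finset.Icc 1 m, (2 * (i : ℤ) - (c : ℤ)) =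
      -(m * c - m * (m + 1)) := by
    intro m
    rw [← sum_lin (c : ℤ) m, ← Finset.sum_neg_distrib]
    apply Finset.sum_congr rfl; intro i _; ring
  rw [h1, h2, h3, h4, h4, sum_lin]
  ring

/-- Case 2 of Lemma 4.3: for `n ≥ ⌊h/2⌋+1`,
`Mo(P_L(j,k,n)) − Mo(C_L(1,h−2)) = 24((j+n)(k−1) + kj) > 0`. -/
theorem lemma43_case2 (j k n h : ℕ) (hj : 1 ≤ j) (hjk : j ≤ k) (hkn : k ≤ n)
    (hh : h = j + k + n + 1) (hn : h / 2 + 1 ≤ n) :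
    MoPL j k n - MoCL1 h =
      24 * (((j : ℤ) + (n : ℤ)) * ((k : ℤ) - 1) + (k : ℤ) * (j : ℤ)) ∧
    (0 : ℤ) < 24 * (((j : ℤ) + (n : ℤ)) * ((k : ℤ) - 1) + (k : ℤ) * (j : ℤ)) := by
  constructor
  · subst hh
    unfold MoPL MoCL1
    simp only []
    set h : ℕ := j + k + n + 1 with hh
    have e1 : (h + 1) / 2 ≤ n := by omega
    have e2 : h / 2 ≤ n := by omega
    have S1 := sum_abs (h + 1) n e1
    have S2 := sum_abs h n e2
    simp only [Nat.cast_add, Nat.cast_one] at S1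
    rw [sum_lin ((h : ℤ) + 1) j, sum_lin ((h : ℤ) + 1) k, S1,
        sum_lin ((h : ℤ)) j, sum_lin ((h : ℤ)) k, S2]
    have hA : (((h + 1) / 2 : ℕ) : ℤ) = (h : ℤ) - ((h / 2 : ℕ) : ℤ) := by omega
    rw [hA]
    have hcast : (h : ℤ) = (j : ℤ) + k + n + 1 := by omega
    rw [hcast]
    ring
  · have hj' : (1 : ℤ) ≤ j := by exact_mod_cast hj
    have hk' : (j : ℤ) ≤ k := by exact_mod_cast hjk
    have hn' : (k : ℤ) ≤ n := by exact_mod_cast hkn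
    nlinarith
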